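/- Let f ∈ C^2[-1,1] and define h = a_{-1}δ_{-1} + a_0 δ_1 + g where a_{-1} = (f(-1) - f'(-1))/2, a_0 = (f'(1) + f(1))/2, and g(x) = (f(x) - f''(x))/2, with δ_{±1} the Dirac deltas at ∓1 and 1. Then for every x ∈ [-1,1], ∫_{-1}^1 e^{-|x-y|} dh(y) = a_{-1} e^{-(x+1)} + a_0 e^{-(1-x)} + ∫_{-1}^1 e^{-|x-y|} g(y) dy = f(x). -/

import Mathlib

theorem stmt_12 (f f' f'' : ℝ → ℝ)
    (hf' : ∀ x ∈ Set.Icc (-1:ℝ) 1, HasDerivAt f (f' x) x)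
    (hf'' : ∀ x ∈ Set.Icc (-1:ℝ) 1, HasDerivAt f' (f'' x) x)
    (hcont : ContinuousOn f'' (Set.Icc (-1:ℝ) 1))
    (am1 a0 : ℝ) (g : ℝ → ℝ)
    (ham1 : am1 = (f (-1) - f' (-1)) / 2)
    (ha0 : a0 = (f' 1 + f 1) / 2)
    (hg : ∀ x, g x = (f x - f'' x) / 2) :
    ∀ x ∈ Set.Icc (-1:ℝ) 1,
      am1 * Real.exp (-(x + 1)) + a0 * Real.exp (-(1 - x))
        + ∫ y in (-1:ℝ)..1, Real.exp (-|x - y|) * g y = f x := by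
  intro x hx
  obtain ⟨hx1, hx2⟩ := hx
  have hsub1 : Set.Icc (-1:ℝ) x ⊆ Set.Icc (-1:ℝ) 1 := Set.Icc_subset_Icc le_rfl hx2
  have hsub2 : Set.Icc x (1:ℝ) ⊆ Set.Icc (-1:ℝ) 1 := Set.Icc_subset_Icc hx1 le_rfl
  have hcf : ContinuousOn f (Set.Icc (-1:ℝ) 1) := fun y hy =>
    (hf' y hy).continuousAt.continuousWithinAt
  have hcf' : ContinuousOn f' (Set.Icc (-1:ℝ) 1) := fun y hy =>
    (hf'' y hy).continuousAt.continuousWithinAt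
  have hcg : ContinuousOn g (Set.Icc (-1:ℝ) 1) :=
    ((hcf.sub hcont).div_const 2).congr (fun y _ => hg y)
  have hcexp : Continuous fun y : ℝ => Real.exp (-|x - y|) :=
    Real.continuous_exp.comp ((continuous_const.sub continuous_id).abs.neg)
  have hint1 : IntervalIntegrable (fun y => Real.exp (-|x - y|) * g y) MeasureTheory.volume (-1) x := by
    apply ContinuousOn.intervalIntegrable
    apply hcexp.continuousOn.mul
    apply hcg.mono
    rw [Set.uIcc_of_le hx1]; exact hsub1
  have hint2 : IntervalIntegrable (fun y => Real.exp (-|x - y|) * g y) MeasureTheory.volume x 1 := by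
    apply ContinuousOn.intervalIntegrable
    apply hcexp.continuousOn.mul
    apply hcg.mono
    rw [Set.uIcc_of_le hx2]; exact hsub2
  have hint1' : IntervalIntegrable (fun y => Real.exp (y - x) * g y) MeasureTheory.volume (-1) x := by
    apply ContinuousOn.intervalIntegrable
    apply (Real.continuous_exp.comp (continuous_id.sub continuous_const)).continuousOn.mul
    apply hcg.mono
    rw [Set.uIcc_of_le hx1]; exact hsub1
  have hint2' : IntervalIntegrable (fun y => Real.exp (x - y) * g y) MeasureTheory.volume x 1 := by
    apply ContinuousOn.intervalIntegrable
    apply (Real.continuous_exp.comp (continuous_const.sub continuous_id)).continuousOn.mul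
    apply hcg.mono
    rw [Set.uIcc_of_le hx2]; exact hsub2
  have hF1 : ∀ y ∈ Set.uIcc (-1:ℝ) x,
      HasDerivAt (fun y => Real.exp (y - x) * ((f y - f' y) / 2)) (Real.exp (y - x) * g y) y := by
    intro y hy
    rw [Set.uIcc_of_le hx1] at hy
    have hy' := hsub1 hy
    have h1 : HasDerivAt (fun y => Real.exp (y - x)) (Real.exp (y - x)) y := by
      simpa using ((hasDerivAt_id y).sub_const x).exp
    have h2 : HasDerivAt (fun y => (f y - f' y) / 2) ((f' y - f'' y) / 2) y :=
      ((hf' y hy').sub (hf'' y hy')).div_const 2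
    have := h1.mul h2
    convert this using 1
    all_goals first | rfl | (rw [hg]; ring)
  have hF2 : ∀ y ∈ Set.uIcc x (1:ℝ),
      HasDerivAt (fun y => -(Real.exp (x - y) * ((f y + f' y) / 2))) (Real.exp (x - y) * g y) y := by
    intro y hy
    rw [Set.uIcc_of_le hx2] at hy
    have hy' := hsub2 hy
    have h1 : HasDerivAt (fun y => Real.exp (x - y)) (-Real.exp (x - y)) y := by
      simpa using ((hasDerivAt_id y).const_sub x).exp
    have h2 : HasDerivAt (fun y => (f y + f' y) / 2) ((f' y + f'' y) / 2) y :=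
      ((hf' y hy').add (hf'' y hy')).div_const 2
    have := (h1.mul h2).neg
    convert this using 1
    all_goals first | rfl | (rw [hg]; ring)
  have hI1 : ∫ y in (-1:ℝ)..x, Real.exp (y - x) * g y
      = Real.exp (x - x) * ((f x - f' x) / 2) - Real.exp (-1 - x) * ((f (-1) - f' (-1)) / 2) :=
    intervalIntegral.integral_eq_sub_of_hasDerivAt hF1 hint1'
  have hI2 : ∫ y in x..(1:ℝ), Real.exp (x - y) * g y
      = -(Real.exp (x - 1) * ((f 1 + f' 1) / 2)) - -(Real.exp (x - x) * ((f x + f' x) / 2)) :=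
    intervalIntegral.integral_eq_sub_of_hasDerivAt hF2 hint2'
  have hsplit : (∫ y in (-1:ℝ)..1, Real.exp (-|x - y|) * g y)
      = (∫ y in (-1:ℝ)..x, Real.exp (-|x - y|) * g y)
        + ∫ y in x..(1:ℝ), Real.exp (-|x - y|) * g y :=
    (intervalIntegral.integral_add_adjacent_intervals hint1 hint2).symm
  have hc1 : (∫ y in (-1:ℝ)..x, Real.exp (-|x - y|) * g y)
      = ∫ y in (-1:ℝ)..x, Real.exp (y - x) * g y := by
    apply intervalIntegral.integral_congr
    intro y hy
    rw [Set.uIcc_of_le hx1] at hy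
    show Real.exp (-|x - y|) * g y = Real.exp (y - x) * g y
    rw [abs_of_nonneg (by linarith [hy.2] : (0:ℝ) ≤ x - y), neg_sub]
  have hc2 : (∫ y in x..(1:ℝ), Real.exp (-|x - y|) * g y)
      = ∫ y in x..(1:ℝ), Real.exp (x - y) * g y := by
    apply intervalIntegral.integral_congr
    intro y hy
    rw [Set.uIcc_of_le hx2] at hy
    show Real.exp (-|x - y|) * g y = Real.exp (x - y) * g y
    rw [abs_of_nonpos (by linarith [hy.1] : x - y ≤ 0), neg_neg]
  have e1 : Real.exp (-(x + 1)) = Real.exp (-1 - x) := by congr 1; ring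
  have e2 : Real.exp (-(1 - x)) = Real.exp (x - 1) := by congr 1; ring
  rw [hsplit, hc1, hc2, hI1, hI2, ham1, ha0, e1, e2, sub_self, Real.exp_zero]
  ring
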